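/- For every k ≥ 2, neither A_k A_k nor A_k B_k nor B_k A_k has an internal occurrence of A_k (an occurrence that is not a prefix and not a suffix), where A_k = S_{k-2} and B_k = Â_k. -/

import Mathlib

/-- The morphism φ: a ↦ ab, b ↦ aa, with `false = a`, `true = b`. -/
def pdPhi (c : Bool) : List Bool := if c then [false, false] else [false, true]

/-- The k-th period-doubling sequence. -/
def pd : ℕ → List Bool
  | 0 => [false]
  | k + 1 => (pd k).flatMap pdPhi

/-- `hat w` : `w` with its last character flipped. -/
def hat (w : List Bool) : List Bool := w.dropLast ++ (w.getLast?.map Bool.not).toList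

/-- `y` occurs in `w` at (0-based) position `i`. -/
def OccAt {α : Type*} (y w : List α) (i : ℕ) : Prop :=
  i + y.length ≤ w.length ∧ (w.drop i).take y.length = y

/-- The number of occurrences (starting positions) of `y` in `w`. -/
def occCount {α : Type*} [DecidableEq α] (y w : List α) : ℕ :=
  ((List.range (w.length + 1)).filter
    (fun i => decide (i + y.length ≤ w.length ∧ (w.drop i).take y.length = y))).length

/-! ### Auxiliary lemmas -/

lemma phi_len (u : List Bool) : (u.flatMap pdPhi).length = 2 * u.length := by
  induction u with
  | nil => simp
  | cons a t ih => cases a <;> simp [pdPhi, ih] <;> omega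

lemma phi_drop (u : List Bool) (j : ℕ) :
    (u.flatMap pdPhi).drop (2*j) = (u.drop j).flatMap pdPhi := by
  induction u generalizing j with
  | nil => simp
  | cons a t ih =>
    cases j with
    | zero => simp
    | succ j =>
      have h2 : 2 * (j+1) = 2*j + 1 + 1 := by omega
      cases a <;> simp only [pdPhi, List.flatMap_cons, if_true, if_false, h2,
        List.cons_append, List.drop_succ_cons, List.nil_append, List.drop_succ_cons] <;>
      exact ih j

lemma phi_take (u : List Bool) (j : ℕ) :
    (u.flatMap pdPhi).take (2*j) = (u.take j).flatMap pdPhi := by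
  induction u generalizing j with
  | nil => simp
  | cons a t ih =>
    cases j with
    | zero => simp
    | succ j =>
      have h2 : 2 * (j+1) = 2*j + 1 + 1 := by omega
      cases a <;> simp [pdPhi, h2, List.take_succ_cons, ih j]

lemma phi_inj : ∀ u v : List Bool, u.flatMap pdPhi = v.flatMap pdPhi → u = v := by
  intro u
  induction u with
  | nil =>
    intro v h
    cases v with
    | nil => rfl
    | cons b s => cases b <;> simp [pdPhi] at h
  | cons a t ih =>
    intro v h
    cases v with
    | nil => cases a <;> simp [pdPhi] at h
    | cons b s =>
      cases a <;> cases b <;> simp [pdPhi] at h <;> rw [ih s h]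

lemma pd_cons (n : ℕ) : ∃ t, pd n = false :: t := by
  induction n with
  | zero => exact ⟨[], rfl⟩
  | succ n ih =>
    obtain ⟨t, ht⟩ := ih
    exact ⟨true :: t.flatMap pdPhi, by simp [pd, ht, pdPhi]⟩

lemma phi_head (v : List Bool) : v.flatMap pdPhi = [] ∨ ∃ r, v.flatMap pdPhi = false :: r := by
  cases v with
  | nil => exact Or.inl rfl
  | cons a t =>
    cases a
    · exact Or.inr ⟨true :: t.flatMap pdPhi, by simp [pdPhi]⟩
    · exact Or.inr ⟨false :: t.flatMap pdPhi, by simp [pdPhi]⟩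

lemma hat_concat (s : List Bool) (c : Bool) : hat (s ++ [c]) = s ++ [!c] := by
  simp [hat]

lemma hat_phi (u : List Bool) (hu : u ≠ []) :
    hat (u.flatMap pdPhi) = (hat u).flatMap pdPhi := by
  rcases List.eq_nil_or_concat u with rfl | ⟨s, c, rfl⟩
  · exact absurd rfl hu
  rw [List.concat_eq_append]
  rw [hat_concat, List.flatMap_append, List.flatMap_append]
  simp only [List.flatMap_cons, List.flatMap_nil, List.append_nil]
  cases c
  · show hat (s.flatMap pdPhi ++ [false, true]) = s.flatMap pdPhi ++ pdPhi true
    rw [show s.flatMap pdPhi ++ [false, true] = (s.flatMap pdPhi ++ [false]) ++ [true] by simp,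
      hat_concat]
    simp [pdPhi]
  · show hat (s.flatMap pdPhi ++ [false, false]) = s.flatMap pdPhi ++ pdPhi false
    rw [show s.flatMap pdPhi ++ [false, false] = (s.flatMap pdPhi ++ [false]) ++ [false] by simp,
      hat_concat]
    simp [pdPhi]

/-- The inductive step: internal occurrences of `φ(A)` in `φ(u)` give internal
occurrences of `A` in `u`. -/
lemma step (n : ℕ) (u : List Bool)
    (h : ¬ ∃ j, OccAt (pd n) u j ∧ j ≠ 0 ∧ j + (pd n).length ≠ u.length) :
    ¬ ∃ i, OccAt (pd (n+1)) (u.flatMap pdPhi) i ∧ i ≠ 0 ∧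
        i + (pd (n+1)).length ≠ (u.flatMap pdPhi).length := by
  rintro ⟨i, ⟨hle, heq⟩, hi0, hine⟩
  have hu : (pd (n+1) : List Bool) = (pd n).flatMap pdPhi := rfl
  obtain ⟨t, hA⟩ := pd_cons n
  have lA : (pd (n+1)).length = 2 * (pd n).length := phi_len _
  have lW : (u.flatMap pdPhi).length = 2 * u.length := phi_len u
  have lA1 : 1 ≤ (pd n).length := by rw [hA]; simp
  rcases Nat.even_or_odd i with ⟨j, hj⟩ | ⟨j, hj⟩
  · -- even position: descend
    have hij : i = 2 * j := by omega
    subst hij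
    rw [hu, show ((pd n).flatMap pdPhi).length = 2 * (pd n).length from phi_len _,
      phi_drop, phi_take] at heq
    have heq' : (u.drop j).take (pd n).length = pd n := phi_inj _ _ heq
    exact h ⟨j, ⟨by simp only [lA, lW] at hle; omega, heq'⟩, by omega,
      by simp only [lA, lW] at hine; omega⟩
  · -- odd position: synchronization contradiction
    have hA1 : pd (n+1) = false :: true :: (t.flatMap pdPhi) := by
      show (pd n).flatMap pdPhi = _
      rw [hA]; simp [pdPhi]
    have hpref : pd (n+1) <+: (u.flatMap pdPhi).drop i := heq ▸ List.take_prefix _ _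
    obtain ⟨s, hs⟩ := hpref
    rw [hA1] at hs
    have hdrop1 : (u.flatMap pdPhi).drop (i+1) = true :: (t.flatMap pdPhi ++ s) := by
      rw [← List.drop_drop (i := 1) (j := i), ← hs]; rfl
    have h2 : (u.flatMap pdPhi).drop (i+1) = (u.drop (j+1)).flatMap pdPhi := by
      rw [show i + 1 = 2 * (j+1) by omega, phi_drop]
    rcases phi_head (u.drop (j+1)) with hnil | ⟨r, hr⟩
    · rw [h2, hnil] at hdrop1; cases hdrop1
    · rw [h2, hr] at hdrop1
      exact Bool.noConfusion (List.head_eq_of_cons_eq hdrop1)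

lemma pd_main (n : ℕ) :
    (¬ ∃ i, OccAt (pd n) (pd n ++ pd n) i ∧ i ≠ 0 ∧
        i + (pd n).length ≠ (pd n ++ pd n).length) ∧
    (¬ ∃ i, OccAt (pd n) (pd n ++ hat (pd n)) i ∧ i ≠ 0 ∧
        i + (pd n).length ≠ (pd n ++ hat (pd n)).length) ∧
    (¬ ∃ i, OccAt (pd n) (hat (pd n) ++ pd n) i ∧ i ≠ 0 ∧
        i + (pd n).length ≠ (hat (pd n) ++ pd n).length) := by
  induction n with
  | zero =>
    have hh : (hat (pd 0)).length = 1 := rfl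
    have hp : (pd 0).length = 1 := rfl
    refine ⟨?_, ?_, ?_⟩ <;> rintro ⟨i, ⟨hle, _⟩, hi0, hine⟩ <;>
      simp only [List.length_append, hh, hp] at hle hine <;> omega
  | succ n ih =>
    obtain ⟨h1, h2, h3⟩ := ih
    obtain ⟨t, ht⟩ := pd_cons n
    have hne : pd n ≠ [] := by rw [ht]; simp
    have hAphi : (pd (n+1) : List Bool) = (pd n).flatMap pdPhi := rfl
    have hBphi : hat (pd (n+1)) = (hat (pd n)).flatMap pdPhi := by
      rw [hAphi, hat_phi _ hne]
    refine ⟨?_, ?_, ?_⟩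
    · rw [hAphi, ← List.flatMap_append]
      exact step n _ h1
    · rw [hBphi, hAphi, ← List.flatMap_append]
      exact step n _ h2
    · rw [hBphi, hAphi, ← List.flatMap_append]
      exact step n _ h3

/-- For `k ≥ 2`, with `A = S_{k-2}` and `B = Â`, none of `AA`, `AB`, `BA` has an
internal occurrence of `A` (an occurrence that is neither a prefix nor a suffix). -/
theorem pd_no_internal_occurrence (k : ℕ) (hk : 2 ≤ k) :
    (¬ ∃ i, OccAt (pd (k-2)) (pd (k-2) ++ pd (k-2)) i ∧ i ≠ 0 ∧
        i + (pd (k-2)).length ≠ (pd (k-2) ++ pd (k-2)).length) ∧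
    (¬ ∃ i, OccAt (pd (k-2)) (pd (k-2) ++ hat (pd (k-2))) i ∧ i ≠ 0 ∧
        i + (pd (k-2)).length ≠ (pd (k-2) ++ hat (pd (k-2))).length) ∧
    (¬ ∃ i, OccAt (pd (k-2)) (hat (pd (k-2)) ++ pd (k-2)) i ∧ i ≠ 0 ∧
        i + (pd (k-2)).length ≠ (hat (pd (k-2)) ++ pd (k-2)).length) :=
  pd_main (k-2)
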